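/- Let A₀ be a real n×n matrix all of whose complex eigenvalues have negative real part, and let (A_ε)_{ε>0} be real n×n matrices with A_ε → A₀ as ε → 0⁺. Then there exists ε₀ > 0 such that for every ε ∈ (0, ε₀] every complex eigenvalue of the matrix I + ε A_ε has modulus strictly less than 1. -/

import Mathlib

open Matrix Filter Topology

lemma aux_mem_spectrum_iff_det {n : ℕ} (B : Matrix (Fin n) (Fin n) ℂ) (ν : ℂ) :
    ν ∈ spectrum ℂ B ↔ (ν • (1 : Matrix (Fin n) (Fin n) ℂ) - B).det = 0 := by
  rw [spectrum.mem_iff, Matrix.isUnit_iff_isUnit_det, isUnit_iff_ne_zero, not_ne_iff,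
    Algebra.algebraMap_eq_smul_one]

lemma aux_spectrum_norm_bound {n : ℕ} (B : Matrix (Fin n) (Fin n) ℂ) {ν : ℂ}
    (hν : ν ∈ spectrum ℂ B) : ‖ν‖ ≤ ∑ i, ∑ j, ‖B i j‖ := by
  rw [aux_mem_spectrum_iff_det] at hν
  obtain ⟨v, hv0, hv⟩ := Matrix.exists_mulVec_eq_zero_iff.mpr hν
  have hBv : B *ᵥ v = ν • v := by
    have := hv
    rw [sub_mulVec, sub_eq_zero] at this
    rw [← this, smul_mulVec, one_mulVec]
  obtain ⟨i, -, hi⟩ := Finset.exists_max_image Finset.univ (fun i => ‖v i‖)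
    ⟨(Function.ne_iff.mp hv0).choose, Finset.mem_univ _⟩
  have hvi : 0 < ‖v i‖ := by
    obtain ⟨j, hj⟩ := Function.ne_iff.mp hv0
    exact lt_of_lt_of_le (by simpa using hj) (hi j (Finset.mem_univ j))
  have key : ‖ν‖ * ‖v i‖ ≤ (∑ i', ∑ j, ‖B i' j‖) * ‖v i‖ := by
    calc ‖ν‖ * ‖v i‖ = ‖(B *ᵥ v) i‖ := by
          rw [hBv]; simp [_root_.map_mul]
      _ ≤ ∑ j, ‖B i j‖ * ‖v j‖ := by
          simp only [Matrix.mulVec, dotProduct, ← norm_mul]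
          exact norm_sum_le _ _
      _ ≤ ∑ j, ‖B i j‖ * ‖v i‖ := by
          refine Finset.sum_le_sum fun j _ => ?_
          exact mul_le_mul_of_nonneg_left (hi j (Finset.mem_univ j)) (norm_nonneg _)
      _ = (∑ j, ‖B i j‖) * ‖v i‖ := by rw [Finset.sum_mul]
      _ ≤ (∑ i', ∑ j, ‖B i' j‖) * ‖v i‖ := by
          refine mul_le_mul_of_nonneg_right ?_ (norm_nonneg _)
          exact Finset.single_le_sum (f := fun i' => ∑ j, ‖B i' j‖)
            (fun i' _ => Finset.sum_nonneg fun j _ => norm_nonneg _) (Finset.mem_univ i)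
  exact le_of_mul_le_mul_right key hvi

/-- If all complex eigenvalues of the real matrix `A₀` have negative real
part and `A ε → A₀` as `ε → 0⁺`, then for all small `ε > 0` every complex eigenvalue of
`I + ε • A ε` has modulus strictly less than `1`. -/
theorem eigenvalues_of_one_add_smul_lt_one
    (n : ℕ) (A₀ : Matrix (Fin n) (Fin n) ℝ)
    (hA₀ : ∀ μ ∈ spectrum ℂ (A₀.map Complex.ofReal), μ.re < 0)
    (A : ℝ → Matrix (Fin n) (Fin n) ℝ)
    (hA : Filter.Tendsto A (nhdsWithin 0 (Set.Ioi 0)) (nhds A₀)) :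
    ∃ ε₀ > (0 : ℝ), ∀ ε ∈ Set.Ioc (0 : ℝ) ε₀,
      ∀ μ ∈ spectrum ℂ (((1 : Matrix (Fin n) (Fin n) ℝ) + ε • A ε).map Complex.ofReal),
        ‖μ‖ < 1 := by
  by_contra hcon
  push_neg at hcon
  have hseq : ∀ k : ℕ, ∃ ε ∈ Set.Ioc (0:ℝ) (1/(k+1)),
      ∃ μ ∈ spectrum ℂ (((1 : Matrix (Fin n) (Fin n) ℝ) + ε • A ε).map Complex.ofReal),
        1 ≤ ‖μ‖ := fun k => hcon (1/(k+1)) (by positivity)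
  choose ε hε μ hμ hμ1 using hseq
  have hε0 : ∀ k, 0 < ε k := fun k => (hε k).1
  have hεto0 : Tendsto ε atTop (𝓝 0) := by
    have h1 : Tendsto (fun k : ℕ => 1/((k:ℝ)+1)) atTop (𝓝 0) :=
      tendsto_one_div_add_atTop_nhds_zero_nat
    exact squeeze_zero (fun k => (hε0 k).le) (fun k => (hε k).2) h1
  have hεto : Tendsto ε atTop (nhdsWithin 0 (Set.Ioi 0)) :=
    tendsto_nhdsWithin_iff.mpr ⟨hεto0, Eventually.of_forall fun k => hε0 k⟩
  have hAto : Tendsto (fun k => A (ε k)) atTop (𝓝 A₀) := hA.comp hεto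
  set B : ℕ → Matrix (Fin n) (Fin n) ℂ := fun k => (A (ε k)).map Complex.ofReal with hBdef
  have hmapcont : Continuous (fun M : Matrix (Fin n) (Fin n) ℝ => M.map Complex.ofReal) :=
    Continuous.matrix_map continuous_id Complex.continuous_ofReal
  have hBto : Tendsto B atTop (𝓝 (A₀.map Complex.ofReal)) := (hmapcont.tendsto _).comp hAto
  set ν : ℕ → ℂ := fun k => (μ k - 1) / (ε k : ℂ) with hνdef
  have hεne : ∀ k, (ε k : ℂ) ≠ 0 := fun k => by exact_mod_cast (hε0 k).ne'
  have hμν : ∀ k, μ k = 1 + (ε k : ℂ) * ν k := by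
    intro k
    show μ k = 1 + (ε k : ℂ) * ((μ k - 1) / (ε k : ℂ))
    rw [mul_div_cancel₀ _ (hεne k)]
    ring
  have hνmem : ∀ k, ν k ∈ spectrum ℂ (B k) := by
    intro k
    have h := hμ k
    rw [aux_mem_spectrum_iff_det] at h
    rw [aux_mem_spectrum_iff_det]
    have hmap : ((1 : Matrix (Fin n) (Fin n) ℝ) + ε k • A (ε k)).map Complex.ofReal
        = (1 : Matrix (Fin n) (Fin n) ℂ) + (ε k : ℂ) • B k := by
      ext i j
      by_cases hij : i = j <;>
        simp [hij, hBdef, Matrix.map_apply, Matrix.add_apply, Matrix.smul_apply, Matrix.one_apply]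
    rw [hmap] at h
    have hscal : μ k • (1 : Matrix (Fin n) (Fin n) ℂ) - ((1 : Matrix (Fin n) (Fin n) ℂ) + (ε k : ℂ) • B k)
        = (ε k : ℂ) • (ν k • (1 : Matrix (Fin n) (Fin n) ℂ) - B k) := by
      rw [hμν k]; module
    rw [hscal, Matrix.det_smul] at h
    exact (mul_eq_zero.mp h).resolve_left (pow_ne_zero _ (hεne k))
  have hsumcont : Continuous (fun M : Matrix (Fin n) (Fin n) ℂ =>
      ∑ i, ∑ j, ‖M i j‖) := by
    refine continuous_finset_sum _ fun i _ => continuous_finset_sum _ fun j _ => ?_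
    exact continuous_norm.comp (Continuous.matrix_elem continuous_id i j)
  have hsum : Tendsto (fun k => ∑ i, ∑ j, ‖B k i j‖) atTop
      (𝓝 (∑ i, ∑ j, ‖(A₀.map Complex.ofReal) i j‖)) :=
    (hsumcont.tendsto _).comp hBto
  obtain ⟨C, hC⟩ := hsum.bddAbove_range
  have hνC : ∀ k, ‖ν k‖ ≤ C := fun k =>
    (aux_spectrum_norm_bound (B k) (hνmem k)).trans (hC ⟨k, rfl⟩)
  have hνb : ∀ k, ν k ∈ Metric.closedBall (0:ℂ) C := fun k => by
    simpa [Metric.mem_closedBall, Complex.dist_eq] using hνC k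
  obtain ⟨nu0, -, φ, hφ, hνφ⟩ :=
    tendsto_subseq_of_bounded Metric.isBounded_closedBall hνb
  have hdetc : Continuous (fun p : ℂ × Matrix (Fin n) (Fin n) ℂ =>
      (p.1 • (1 : Matrix (Fin n) (Fin n) ℂ) - p.2).det) := by
    exact Continuous.matrix_det ((continuous_fst.smul continuous_const).sub continuous_snd)
  have hdet : (nu0 • (1 : Matrix (Fin n) (Fin n) ℂ) - A₀.map Complex.ofReal).det = 0 := by
    have hpair : Tendsto (fun k => (ν (φ k), B (φ k))) atTop
        (𝓝 (nu0, A₀.map Complex.ofReal)) :=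
      hνφ.prodMk_nhds (hBto.comp hφ.tendsto_atTop)
    have h1 := (hdetc.tendsto _).comp hpair
    have h2 : (fun k => (ν (φ k) • (1 : Matrix (Fin n) (Fin n) ℂ) - B (φ k)).det)
        = fun _ => (0:ℂ) := by
      funext k
      exact (aux_mem_spectrum_iff_det _ _).mp (hνmem (φ k))
    simp only [Function.comp_def] at h1
    rw [h2] at h1
    exact (tendsto_nhds_unique tendsto_const_nhds h1).symm
  have hnu0mem : nu0 ∈ spectrum ℂ (A₀.map Complex.ofReal) :=
    (aux_mem_spectrum_iff_det _ _).mpr hdet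
  have hneg := hA₀ _ hnu0mem
  have hC0 : 0 ≤ C := le_trans (norm_nonneg _) (hνC 0)
  have hre : ∀ k, -(ε k * C^2)/2 ≤ (ν k).re := by
    intro k
    have h1 := hμ1 k
    rw [hμν k] at h1
    have h2 : (1:ℝ) ≤ Complex.normSq (1 + (ε k : ℂ) * ν k) := by
      nlinarith [Complex.sq_norm (1 + (ε k : ℂ) * ν k), h1, norm_nonneg (1 + (ε k : ℂ) * ν k)]
    have h3 : (ν k).re^2 + (ν k).im^2 ≤ C^2 := by
      have h5 : ‖ν k‖ ^ 2 ≤ C ^ 2 :=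
        pow_le_pow_left₀ (norm_nonneg _) (hνC k) 2
      rw [Complex.sq_norm, Complex.normSq_apply] at h5
      nlinarith [h5]
    have h4 : Complex.normSq (1 + (ε k : ℂ) * ν k)
        = 1 + 2 * ε k * (ν k).re + (ε k)^2 * ((ν k).re^2 + (ν k).im^2) := by
      simp [Complex.normSq_apply, Complex.add_re, Complex.add_im, Complex.one_re,
        Complex.one_im, Complex.mul_re, Complex.mul_im, Complex.ofReal_re, Complex.ofReal_im]
      ring
    nlinarith [hε0 k, sq_nonneg (ε k)]
  have h2 : Tendsto (fun k => -(ε (φ k) * C^2)/2) atTop (𝓝 (-(0 * C^2)/2)) := by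
    have : Tendsto (fun k => ε (φ k)) atTop (𝓝 0) := hεto0.comp hφ.tendsto_atTop
    exact (((this.mul_const (C^2)).neg).div_const 2)
  have h1 : Tendsto (fun k => (ν (φ k)).re) atTop (𝓝 nu0.re) :=
    (Complex.continuous_re.tendsto _).comp hνφ
  have hge : (-(0 * C^2)/2 : ℝ) ≤ nu0.re :=
    le_of_tendsto_of_tendsto h2 h1 (Eventually.of_forall fun k => hre (φ k))
  rw [show (-(0 * C^2)/2 : ℝ) = 0 by ring] at hge
  linarith
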